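/- Let μ be a probability distribution on ℝ^d, S an m-dimensional subspace, and suppose ‖P_S r(x)‖ ≥ 1 - ξ and ‖r(x)‖ = 1 for μ-almost every x, where r : ℝ^d → ℝ^d is measurable. Suppose further that for μ-almost every x the flat decision boundary condition holds: for all v with ‖v‖ ≤ ρ, |⟪r(x), v⟫| ≥ 1 implies x+v or x−v is misclassified (predicate M(x,v) holds), where ρ = √(e·m)/(δ(1-ξ)). Then there exists v with ‖v‖ ≤ ρ such that ℙ_{x∼μ}[M(x,v)] ≥ 1 - δ. -/

import Mathlib

open MeasureTheory
open scoped RealInnerProductSpace ENNReal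

lemma aux_sqrt_pow {a : ℝ} (ha : 0 ≤ a) (k : ℕ) : Real.sqrt (a ^ k) = Real.sqrt a ^ k := by
  have h2 : (Real.sqrt a ^ k) ^ 2 = a ^ k := by
    rw [← pow_mul, mul_comm, pow_mul, Real.sq_sqrt ha]
  rw [← h2, Real.sqrt_sq (by positivity)]

lemma aux_exp (k : ℕ) : (1:ℝ) ≤ Real.sqrt (Real.exp 1) * Real.sqrt ((k:ℝ)/(k+1)) ^ k := by
  rcases Nat.eq_zero_or_pos k with rfl | hk
  · simpa using Real.one_le_sqrt.mpr (by linarith [Real.add_one_le_exp (1:ℝ)])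
  · have hk0 : (0:ℝ) < k := by exact_mod_cast hk
    have hk1 : (0:ℝ) < (k:ℝ) + 1 := by linarith
    have ha : (0:ℝ) ≤ (k:ℝ)/(k+1) := by positivity
    have h1 : ((k:ℝ)+1)/k ≤ Real.exp (1/k) := by
      have := Real.add_one_le_exp (1/(k:ℝ))
      calc ((k:ℝ)+1)/k = 1/(k:ℝ) + 1 := by field_simp; ring
        _ ≤ Real.exp (1/k) := this
    have h2 : (((k:ℝ)+1)/k) ^ k ≤ Real.exp 1 := by
      calc (((k:ℝ)+1)/k) ^ k ≤ Real.exp (1/k) ^ k := by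
            apply pow_le_pow_left₀ (by positivity) h1
        _ = Real.exp 1 := by
            rw [← Real.exp_nat_mul]
            congr 1
            field_simp
    have h3 : (1:ℝ) ≤ Real.exp 1 * ((k:ℝ)/(k+1)) ^ k := by
      have hkk : ((k:ℝ)/(k+1)) ^ k * (((k:ℝ)+1)/k) ^ k = 1 := by
        rw [← mul_pow]
        field_simp
        simp
      have hp : (0:ℝ) < ((k:ℝ)/(k+1)) ^ k := by positivity
      nlinarith [mul_le_mul_of_nonneg_left h2 hp.le]
    calc (1:ℝ) = Real.sqrt 1 := by simp
      _ ≤ Real.sqrt (Real.exp 1 * ((k:ℝ)/(k+1)) ^ k) := Real.sqrt_le_sqrt h3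
      _ = Real.sqrt (Real.exp 1) * Real.sqrt ((k:ℝ)/(k+1)) ^ k := by
          rw [Real.sqrt_mul (Real.exp_pos 1).le, aux_sqrt_pow ha]


noncomputable def splitMap (k : ℕ) : EuclideanSpace ℝ (Fin (k+1)) → ℝ × EuclideanSpace ℝ (Fin k) :=
  fun w => (w 0, (MeasurableEquiv.toLp 2 (Fin k → ℝ)) (fun i => w i.succ))

lemma norm_split (k : ℕ) (w : EuclideanSpace ℝ (Fin (k+1))) :
    ‖w‖^2 = (w 0)^2 + ‖(splitMap k w).2‖^2 := by
  have h1 : ‖w‖^2 = ∑ i, (w i)^2 := by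
    rw [EuclideanSpace.norm_eq, Real.sq_sqrt (by positivity)]
    simp [sq_abs]
  have h2 : ‖(splitMap k w).2‖^2 = ∑ i : Fin k, (w i.succ)^2 := by
    rw [EuclideanSpace.norm_eq, Real.sq_sqrt (by positivity)]
    simp [splitMap, sq_abs]
  rw [h1, h2, Fin.sum_univ_succ]

lemma splitMap_mp (k : ℕ) : MeasurePreserving (splitMap k) volume volume := by
  have mp1 := EuclideanSpace.volume_preserving_symm_measurableEquiv_toLp (Fin (k+1))
  have mp2 := volume_preserving_piFinSuccAbove (fun _ : Fin (k+1) => ℝ) 0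
  have mp3 := ((MeasurePreserving.id (volume : Measure ℝ)).prod
    (EuclideanSpace.volume_preserving_symm_measurableEquiv_toLp (Fin k)).symm)
  have heq : splitMap k = (Prod.map id (MeasurableEquiv.toLp 2 (Fin k → ℝ)).symm.symm) ∘
      (MeasurableEquiv.piFinSuccAbove (fun _ : Fin (k+1) => ℝ) 0) ∘
      (MeasurableEquiv.toLp 2 (Fin (k+1) → ℝ)).symm := by
    funext w
    simp only [splitMap, Function.comp_apply, MeasurableEquiv.piFinSuccAbove,
      MeasurableEquiv.coe_mk, Fin.insertNthEquiv, Fin.succAbove_zero, Prod.map,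
      MeasurableEquiv.coe_toLp_symm, MeasurableEquiv.symm_symm, MeasurableEquiv.coe_toLp, Fin.removeNth]
    exact Prod.ext rfl rfl
  rw [heq, show (volume : Measure (ℝ × EuclideanSpace ℝ (Fin k))) = volume.prod volume from Measure.volume_eq_prod _ _]
  exact mp3.comp (mp2.comp mp1)

lemma slab_upper (k : ℕ) {s ρ : ℝ} (hs : 0 ≤ s) (hρ : 0 < ρ) :
    volume {w : EuclideanSpace ℝ (Fin (k+1)) | |w 0| ≤ s ∧ ‖w‖ < ρ} ≤
      ENNReal.ofReal (2*s) * volume (Metric.ball (0 : EuclideanSpace ℝ (Fin k)) ρ) := by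
  have hsub : {w : EuclideanSpace ℝ (Fin (k+1)) | |w 0| ≤ s ∧ ‖w‖ < ρ} ⊆
      (splitMap k) ⁻¹' (Set.Icc (-s) s ×ˢ Metric.ball 0 ρ) := by
    rintro w ⟨h1, h2⟩
    have hns := norm_split k w
    refine ⟨Set.mem_Icc.mpr (abs_le.mp h1), mem_ball_zero_iff.mpr ?_⟩
    nlinarith [norm_nonneg (splitMap k w).2, norm_nonneg w, abs_nonneg (w 0), sq_abs (w 0)]
  calc volume {w : EuclideanSpace ℝ (Fin (k+1)) | |w 0| ≤ s ∧ ‖w‖ < ρ}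
      ≤ volume ((splitMap k) ⁻¹' (Set.Icc (-s) s ×ˢ Metric.ball 0 ρ)) := measure_mono hsub
    _ = volume (Set.Icc (-s) s ×ˢ Metric.ball (0 : EuclideanSpace ℝ (Fin k)) ρ) :=
        (splitMap_mp k).measure_preimage
          (measurableSet_Icc.prod measurableSet_ball).nullMeasurableSet
    _ = ENNReal.ofReal (2*s) * volume (Metric.ball (0 : EuclideanSpace ℝ (Fin k)) ρ) := by
        rw [show (volume : Measure (ℝ × EuclideanSpace ℝ (Fin k))) = volume.prod volume from
          Measure.volume_eq_prod _ _, Measure.prod_prod, Real.volume_Icc]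
        congr 1
        ring_nf

lemma ball_lower (k : ℕ) {ρ : ℝ} (hρ : 0 < ρ) (hk : k ≠ 0) :
    ENNReal.ofReal (2*(ρ/Real.sqrt (k+1))) *
      volume (Metric.ball (0 : EuclideanSpace ℝ (Fin k)) (ρ * Real.sqrt ((k:ℝ)/(k+1)))) ≤
    volume (Metric.ball (0 : EuclideanSpace ℝ (Fin (k+1))) ρ) := by
  have hk0 : (0:ℝ) < k := by exact_mod_cast Nat.pos_of_ne_zero hk
  have hk1 : (0:ℝ) < (k:ℝ) + 1 := by linarith
  set c := ρ / Real.sqrt ((k:ℝ)+1) with hc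
  set ρ' := ρ * Real.sqrt ((k:ℝ)/(k+1)) with hρ'
  have hcpos : 0 < c := by positivity
  have hc2 : c^2 = ρ^2 / ((k:ℝ)+1) := by
    rw [hc, div_pow, Real.sq_sqrt hk1.le]
  have hρ'2 : ρ'^2 = ρ^2 * ((k:ℝ)/(k+1)) := by
    rw [hρ', mul_pow, Real.sq_sqrt (by positivity)]
  have hsub : (splitMap k) ⁻¹' (Set.Ioo (-c) c ×ˢ Metric.ball 0 ρ') ⊆
      Metric.ball (0 : EuclideanSpace ℝ (Fin (k+1))) ρ := by
    rintro w ⟨h1, h2⟩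
    rw [mem_ball_zero_iff] at h2 ⊢
    have hns := norm_split k w
    rw [Set.mem_Ioo] at h1
    have h10 : (splitMap k w).1 = w 0 := rfl
    rw [h10] at h1
    have hw0 : (w 0)^2 < c^2 := by nlinarith [h1.1, h1.2]
    have ht : ‖(splitMap k w).2‖^2 < ρ'^2 := by
      nlinarith [norm_nonneg (splitMap k w).2, mul_pos hρ (Real.sqrt_pos.mpr (show (0:ℝ) < (k:ℝ)/(k+1) by positivity))]
    have : ‖w‖^2 < ρ^2 := by
      rw [hns]
      have : c^2 + ρ'^2 = ρ^2 := by rw [hc2, hρ'2]; field_simp; ring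
      nlinarith
    nlinarith [norm_nonneg w]
  calc ENNReal.ofReal (2*c) * volume (Metric.ball (0 : EuclideanSpace ℝ (Fin k)) ρ')
      = volume (Set.Ioo (-c) c ×ˢ Metric.ball (0 : EuclideanSpace ℝ (Fin k)) ρ') := by
        rw [show (volume : Measure (ℝ × EuclideanSpace ℝ (Fin k))) = volume.prod volume from
          Measure.volume_eq_prod _ _, Measure.prod_prod, Real.volume_Ioo]
        congr 1
        ring_nf
    _ = volume ((splitMap k) ⁻¹' (Set.Ioo (-c) c ×ˢ Metric.ball 0 ρ')) :=
        ((splitMap_mp k).measure_preimage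
          (measurableSet_Ioo.prod measurableSet_ball).nullMeasurableSet).symm
    _ ≤ volume (Metric.ball (0 : EuclideanSpace ℝ (Fin (k+1))) ρ) := measure_mono hsub




lemma anticonc (k : ℕ) (u : EuclideanSpace ℝ (Fin (k+1))) (hu : ‖u‖ = 1)
    {s ρ : ℝ} (hs : 0 ≤ s) (hρ : 0 < ρ) :
    volume {w : EuclideanSpace ℝ (Fin (k+1)) | |⟪u, w⟫| ≤ s ∧ ‖w‖ < ρ} ≤
      ENNReal.ofReal (s * Real.sqrt (Real.exp 1 * (k+1)) / ρ) *
        volume (Metric.ball (0 : EuclideanSpace ℝ (Fin (k+1))) ρ) := by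
  have hsqe : (1:ℝ) ≤ Real.sqrt (Real.exp 1) :=
    Real.one_le_sqrt.mpr (by linarith [Real.add_one_le_exp (1:ℝ)])
  rcases Nat.eq_zero_or_pos k with rfl | hkpos
  · -- dimension 1
    have hu0 : |u 0| = 1 := by
      have h := hu
      rw [EuclideanSpace.norm_eq] at h
      simp only [Fin.sum_univ_succ, Fin.sum_univ_zero, Real.norm_eq_abs, add_zero] at h
      rwa [Real.sqrt_sq_eq_abs, abs_abs] at h
    have hsub : {w : EuclideanSpace ℝ (Fin 1) | |⟪u, w⟫| ≤ s ∧ ‖w‖ < ρ} ⊆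
        Metric.closedBall 0 s := by
      rintro w ⟨h1, _⟩
      rw [Metric.mem_closedBall, dist_zero_right]
      have hinner : ⟪u, w⟫ = u 0 * w 0 := by
        simp [PiLp.inner_apply, Fin.sum_univ_one, RCLike.inner_apply, conj_trivial]
        ring
      have hnw : ‖w‖ = |w 0| := by
        rw [EuclideanSpace.norm_eq]
        simp only [Fin.sum_univ_succ, Fin.sum_univ_zero, Real.norm_eq_abs, add_zero]
        rw [Real.sqrt_sq_eq_abs, abs_abs]
      rw [hnw]
      calc |w 0| = |u 0| * |w 0| := by rw [hu0, one_mul]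
        _ = |⟪u, w⟫| := by rw [hinner, abs_mul]
        _ ≤ s := h1
    calc volume {w : EuclideanSpace ℝ (Fin 1) | |⟪u, w⟫| ≤ s ∧ ‖w‖ < ρ}
        ≤ volume (Metric.closedBall (0 : EuclideanSpace ℝ (Fin 1)) s) := measure_mono hsub
      _ = ENNReal.ofReal (s ^ Module.finrank ℝ (EuclideanSpace ℝ (Fin (0+1)))) *
            volume (Metric.ball (0 : EuclideanSpace ℝ (Fin (0+1))) 1) :=
          Measure.addHaar_closedBall volume 0 hs
      _ ≤ ENNReal.ofReal (s * Real.sqrt (Real.exp 1 * ((0:ℕ)+1)) / ρ) *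
            volume (Metric.ball (0 : EuclideanSpace ℝ (Fin (0+1))) ρ) := by
          rw [Measure.addHaar_ball_of_pos volume 0 hρ, finrank_euclideanSpace_fin]
          rw [← mul_assoc, ← ENNReal.ofReal_mul (by positivity)]
          refine mul_le_mul_left (ENNReal.ofReal_le_ofReal ?_) _
          have h01 : Real.exp 1 * (((0:ℕ):ℝ)+1) = Real.exp 1 := by norm_num
          rw [h01]
          simp only [pow_succ, pow_zero, one_mul]
          rw [div_mul_cancel₀ _ hρ.ne']
          nlinarith
  · -- dimension ≥ 2
    have hk : k ≠ 0 := hkpos.ne'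
    have hk0 : (0:ℝ) < k := by exact_mod_cast hkpos
    have hk1 : (0:ℝ) < (k:ℝ) + 1 := by linarith
    -- orthonormal basis with b 0 = u
    have horth : Orthonormal ℝ (({0} : Set (Fin (k+1))).restrict fun _ => u) := by
      constructor
      · intro i; exact hu
      · intro i j hij
        exact absurd (Subtype.ext (by
          have hi := i.2; have hj := j.2
          simp only [Set.mem_singleton_iff] at hi hj
          rw [hi, hj])) hij
    obtain ⟨b, hb⟩ := Orthonormal.exists_orthonormalBasis_extension_of_card_eq
      (𝕜 := ℝ) (by simp) horth
    have hb0 : b 0 = u := hb 0 rfl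
    have hset : {w : EuclideanSpace ℝ (Fin (k+1)) | |⟪u, w⟫| ≤ s ∧ ‖w‖ < ρ} =
        ⇑b.repr ⁻¹' {w' : EuclideanSpace ℝ (Fin (k+1)) | |w' 0| ≤ s ∧ ‖w'‖ < ρ} := by
      ext w
      simp only [Set.mem_setOf_eq, Set.mem_preimage]
      rw [b.repr_apply_apply, hb0, b.repr.norm_map]
    set c := ρ / Real.sqrt ((k:ℝ)+1) with hcdef
    set ρ' := ρ * Real.sqrt ((k:ℝ)/(k+1)) with hρ'def
    have hρ'pos : 0 < ρ' := by positivity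
    have hreal : 2*s*ρ^k ≤ s * Real.sqrt (Real.exp 1 * (k+1)) / ρ * (2*c*ρ'^k) := by
      have hsq : Real.sqrt (Real.exp 1 * (k+1)) =
          Real.sqrt (Real.exp 1) * Real.sqrt ((k:ℝ)+1) := by
        rw [Real.sqrt_mul (Real.exp_pos 1).le]
      have hq : ρ'^k = ρ^k * Real.sqrt ((k:ℝ)/(k+1)) ^ k := mul_pow _ _ _
      have hrw : s * Real.sqrt (Real.exp 1 * (k+1)) / ρ * (2*c*ρ'^k) =
          2*s*ρ^k * (Real.sqrt (Real.exp 1) * Real.sqrt ((k:ℝ)/(k+1)) ^ k) := by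
        rw [hsq, hq, hcdef]
        have h1 : Real.sqrt ((k:ℝ)+1) ≠ 0 := by positivity
        field_simp
      rw [hrw]
      nlinarith [aux_exp k, sq_nonneg s, pow_nonneg hρ.le k,
        mul_le_mul_of_nonneg_left (aux_exp k) (by positivity : (0:ℝ) ≤ 2*s*ρ^k)]
    calc volume {w : EuclideanSpace ℝ (Fin (k+1)) | |⟪u, w⟫| ≤ s ∧ ‖w‖ < ρ}
        = volume {w' : EuclideanSpace ℝ (Fin (k+1)) | |w' 0| ≤ s ∧ ‖w'‖ < ρ} := by
          rw [hset]
          have h1 : Measurable fun w' : EuclideanSpace ℝ (Fin (k+1)) => w' 0 :=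
            (measurable_pi_apply 0).comp
              (MeasurableEquiv.toLp 2 (Fin (k+1) → ℝ)).symm.measurable
          have hmeas : MeasurableSet
              {w' : EuclideanSpace ℝ (Fin (k+1)) | |w' 0| ≤ s ∧ ‖w'‖ < ρ} := by
            rw [Set.setOf_and]
            exact (measurableSet_le h1.abs measurable_const).inter
              (measurableSet_lt measurable_norm measurable_const)
          exact b.measurePreserving_repr.measure_preimage hmeas.nullMeasurableSet
      _ ≤ ENNReal.ofReal (2*s) * volume (Metric.ball (0 : EuclideanSpace ℝ (Fin k)) ρ) :=
          slab_upper k hs hρ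
      _ = ENNReal.ofReal (2*s*ρ^k) * volume (Metric.ball (0 : EuclideanSpace ℝ (Fin k)) 1) := by
          rw [Measure.addHaar_ball_of_pos volume 0 hρ, finrank_euclideanSpace_fin,
            ← mul_assoc, ← ENNReal.ofReal_mul (by positivity)]
      _ ≤ ENNReal.ofReal (s * Real.sqrt (Real.exp 1 * (k+1)) / ρ * (2*c*ρ'^k)) *
            volume (Metric.ball (0 : EuclideanSpace ℝ (Fin k)) 1) :=
          mul_le_mul_left (ENNReal.ofReal_le_ofReal hreal) _
      _ = ENNReal.ofReal (s * Real.sqrt (Real.exp 1 * (k+1)) / ρ) *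
            (ENNReal.ofReal (2*c) *
              volume (Metric.ball (0 : EuclideanSpace ℝ (Fin k)) ρ')) := by
          rw [Measure.addHaar_ball_of_pos volume 0 hρ'pos, finrank_euclideanSpace_fin,
            ENNReal.ofReal_mul (by positivity), ENNReal.ofReal_mul (by positivity)]
          ring
      _ ≤ ENNReal.ofReal (s * Real.sqrt (Real.exp 1 * (k+1)) / ρ) *
            volume (Metric.ball (0 : EuclideanSpace ℝ (Fin (k+1))) ρ) :=
          mul_le_mul_right (ball_lower k hρ hk) _


/-- Theorem 1 of the paper: under the flat decision boundary model, if the normals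
`r(x)` nearly lie in an `m`-dimensional subspace `S`, there exists a universal
perturbation of norm at most `ρ = √(em)/(δ(1-ξ))` fooling a `1-δ` fraction of points. -/
theorem stmt_10 (d m : ℕ) (hm : 1 ≤ m)
    (μ : Measure (EuclideanSpace ℝ (Fin d))) [IsProbabilityMeasure μ]
    (S : Submodule ℝ (EuclideanSpace ℝ (Fin d))) (hSdim : Module.finrank ℝ S = m)
    (r : EuclideanSpace ℝ (Fin d) → EuclideanSpace ℝ (Fin d)) (hr : Measurable r)
    (M : EuclideanSpace ℝ (Fin d) → EuclideanSpace ℝ (Fin d) → Prop)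
    (hM : MeasurableSet {p : EuclideanSpace ℝ (Fin d) × EuclideanSpace ℝ (Fin d) |
        M p.1 p.2})
    (δ ξ ρ : ℝ) (hδ0 : 0 < δ) (hδ1 : δ < 1) (hξ0 : 0 ≤ ξ) (hξ1 : ξ < 1)
    (hρ : ρ = Real.sqrt (Real.exp 1 * m) / (δ * (1 - ξ)))
    (hnorm : ∀ᵐ x ∂μ, ‖r x‖ = 1)
    (hproj : ∀ᵐ x ∂μ, 1 - ξ ≤ ‖(S.orthogonalProjectionOnto (r x) : EuclideanSpace ℝ (Fin d))‖)
    (hflat : ∀ᵐ x ∂μ, ∀ v : EuclideanSpace ℝ (Fin d),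
      ‖v‖ ≤ ρ → 1 ≤ |⟪r x, v⟫| → M x v) :
    ∃ v : EuclideanSpace ℝ (Fin d), ‖v‖ ≤ ρ ∧ 1 - δ ≤ (μ {x | M x v}).toReal := by
  obtain ⟨k, rfl⟩ : ∃ k, m = k + 1 := ⟨m - 1, by omega⟩
  have hξpos : (0:ℝ) < 1 - ξ := by linarith
  have hsqem : (0:ℝ) < Real.sqrt (Real.exp 1 * ((k:ℝ)+1)) := by
    apply Real.sqrt_pos.mpr
    have := Real.exp_pos 1
    positivity
  have hρpos : 0 < ρ := by
    rw [hρ]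
    push_cast
    positivity
  -- the isometry between E' and S
  have hdim : Fin (k+1) ≃ Fin (Module.finrank ℝ S) := finCongr hSdim.symm
  let φ : EuclideanSpace ℝ (Fin (k+1)) ≃ₗᵢ[ℝ] S :=
    (LinearIsometryEquiv.piLpCongrLeft 2 ℝ ℝ hdim).trans (stdOrthonormalBasis ℝ S).repr.symm
  -- the uniform measure on the ball of radius ρ
  set B := volume (Metric.ball (0 : EuclideanSpace ℝ (Fin (k+1))) ρ) with hB
  have hBpos : 0 < B := Metric.measure_ball_pos volume 0 hρpos
  have hBfin : B < ⊤ := measure_ball_lt_top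
  set ν : Measure (EuclideanSpace ℝ (Fin (k+1))) := B⁻¹ • volume.restrict (Metric.ball (0 : EuclideanSpace ℝ (Fin (k+1))) ρ) with hν
  have hν_apply : ∀ t : Set (EuclideanSpace ℝ (Fin (k+1))), ν t = B⁻¹ * volume (t ∩ Metric.ball (0 : EuclideanSpace ℝ (Fin (k+1))) ρ) := by
    intro t
    rw [hν, Measure.smul_apply, Measure.restrict_apply' Metric.isOpen_ball.measurableSet]
    rfl
  haveI hνprob : IsProbabilityMeasure ν := by
    constructor
    rw [hν_apply, Set.univ_inter, ← hB]
    exact ENNReal.inv_mul_cancel hBpos.ne' hBfin.ne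
  -- the bad set
  set Bad : Set ((EuclideanSpace ℝ (Fin d)) × (EuclideanSpace ℝ (Fin (k+1)))) := {p : (EuclideanSpace ℝ (Fin d)) × (EuclideanSpace ℝ (Fin (k+1))) | ¬ M p.1 ((φ p.2 : EuclideanSpace ℝ (Fin d)))} with hBadDef
  have hΨ : Measurable fun p : (EuclideanSpace ℝ (Fin d)) × (EuclideanSpace ℝ (Fin (k+1))) => (p.1, (φ p.2 : EuclideanSpace ℝ (Fin d))) := by
    apply measurable_fst.prodMk
    exact (continuous_subtype_val.comp φ.continuous).measurable.comp measurable_snd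
  have hBad : MeasurableSet Bad := by
    have : Bad = ((fun p : (EuclideanSpace ℝ (Fin d)) × (EuclideanSpace ℝ (Fin (k+1))) =>
        (p.1, (φ p.2 : EuclideanSpace ℝ (Fin d)))) ⁻¹' {p | M p.1 p.2})ᶜ := rfl
    rw [this]
    exact (hΨ hM).compl
  -- per-x estimate
  have stepA : ∀ᵐ x ∂μ, ν {w : EuclideanSpace ℝ (Fin (k+1)) | ¬ M x ((φ w : EuclideanSpace ℝ (Fin d)))} ≤ ENNReal.ofReal δ := by
    filter_upwards [hnorm, hproj, hflat] with x hnx hpx hfx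
    set p := S.orthogonalProjectionOnto (r x) with hp
    set u : EuclideanSpace ℝ (Fin (k+1)) := φ.symm p with hu
    have hup : ‖u‖ = ‖(p : EuclideanSpace ℝ (Fin d))‖ := by
      rw [hu, φ.symm.norm_map]
      rfl
    have hunorm : 1 - ξ ≤ ‖u‖ := by rw [hup]; exact hpx
    have hupos : (0:ℝ) < ‖u‖ := lt_of_lt_of_le hξpos hunorm
    have hune : ‖u‖ ≠ 0 := hupos.ne'
    set uhat : EuclideanSpace ℝ (Fin (k+1)) := ‖u‖⁻¹ • u with huhat
    have huhatnorm : ‖uhat‖ = 1 := by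
      rw [huhat, norm_smul, norm_inv, norm_norm, inv_mul_cancel₀ hune]
    -- inner product identity
    have hinner : ∀ w : EuclideanSpace ℝ (Fin (k+1)), ⟪r x, (φ w : EuclideanSpace ℝ (Fin d))⟫ = ⟪u, w⟫ := by
      intro w
      have h1 : ⟪r x - (p : EuclideanSpace ℝ (Fin d)), (φ w : EuclideanSpace ℝ (Fin d))⟫ = 0 :=
        S.starProjection_inner_eq_zero (r x) (φ w : EuclideanSpace ℝ (Fin d)) (φ w).2
      have h2 : ⟪r x, (φ w : EuclideanSpace ℝ (Fin d))⟫ = ⟪(p : EuclideanSpace ℝ (Fin d)), (φ w : EuclideanSpace ℝ (Fin d))⟫ := by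
        have := inner_sub_left (𝕜 := ℝ) (r x) (p : EuclideanSpace ℝ (Fin d)) (φ w : EuclideanSpace ℝ (Fin d))
        rw [h1] at this
        linarith
      rw [h2]
      have h3 : ⟪(p : EuclideanSpace ℝ (Fin d)), (φ w : EuclideanSpace ℝ (Fin d))⟫ = ⟪p, φ w⟫ := rfl
      rw [h3, ← φ.apply_symm_apply p, φ.inner_map_map, ← hu]
    -- set inclusion
    have hincl : {w : EuclideanSpace ℝ (Fin (k+1)) | ¬ M x ((φ w : EuclideanSpace ℝ (Fin d)))} ∩ Metric.ball (0 : EuclideanSpace ℝ (Fin (k+1))) ρ ⊆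
        {w : EuclideanSpace ℝ (Fin (k+1)) | |⟪uhat, w⟫| ≤ 1/(1-ξ) ∧ ‖w‖ < ρ} := by
      rintro w ⟨hw1, hw2⟩
      rw [mem_ball_zero_iff] at hw2
      refine ⟨?_, hw2⟩
      by_contra hcon
      push_neg at hcon
      have huhatw : ⟪uhat, w⟫ = ‖u‖⁻¹ * ⟪u, w⟫ := real_inner_smul_left u w ‖u‖⁻¹
      have h1le : 1 ≤ |⟪r x, (φ w : EuclideanSpace ℝ (Fin d))⟫| := by
        rw [hinner w]
        have : |⟪u, w⟫| = ‖u‖ * |⟪uhat, w⟫| := by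
          rw [huhatw, abs_mul, abs_inv, abs_norm]
          field_simp
        rw [this]
        calc (1:ℝ) = (1-ξ) * (1/(1-ξ)) := by field_simp
          _ ≤ ‖u‖ * |⟪uhat, w⟫| := by
            apply mul_le_mul hunorm hcon.le (by positivity) (norm_nonneg u)
      have hnφ : ‖(φ w : EuclideanSpace ℝ (Fin d))‖ ≤ ρ := by
        have : ‖(φ w : EuclideanSpace ℝ (Fin d))‖ = ‖w‖ := by rw [← φ.norm_map w]; rfl
        rw [this]; exact hw2.le
      exact hw1 (hfx (φ w : EuclideanSpace ℝ (Fin d)) hnφ h1le)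
    -- measure estimate
    have hkey : 1/(1-ξ) * Real.sqrt (Real.exp 1 * ((k:ℝ)+1)) / ρ = δ := by
      rw [hρ]
      have h1 : Real.sqrt (Real.exp 1 * ((k+1:ℕ):ℝ)) =
          Real.sqrt (Real.exp 1 * ((k:ℝ)+1)) := by push_cast; ring_nf
      rw [h1]
      field_simp
    calc ν {w : EuclideanSpace ℝ (Fin (k+1)) | ¬ M x ((φ w : EuclideanSpace ℝ (Fin d)))}
        = B⁻¹ * volume ({w : EuclideanSpace ℝ (Fin (k+1)) | ¬ M x ((φ w : EuclideanSpace ℝ (Fin d)))} ∩ Metric.ball (0 : EuclideanSpace ℝ (Fin (k+1))) ρ) :=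
          hν_apply _
      _ ≤ B⁻¹ * volume {w : EuclideanSpace ℝ (Fin (k+1)) | |⟪uhat, w⟫| ≤ 1/(1-ξ) ∧ ‖w‖ < ρ} :=
          mul_le_mul_right (measure_mono hincl) _
      _ ≤ B⁻¹ * (ENNReal.ofReal (1/(1-ξ) * Real.sqrt (Real.exp 1 * ((k:ℝ)+1)) / ρ) * B) := by
          refine mul_le_mul_right ?_ _
          rw [hB]
          exact anticonc k uhat huhatnorm (by positivity) hρpos
      _ = ENNReal.ofReal δ := by
          rw [hkey, mul_comm (ENNReal.ofReal δ) B, ← mul_assoc,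
            ENNReal.inv_mul_cancel hBpos.ne' hBfin.ne, one_mul]
  -- Fubini
  have hfub1 : (μ.prod ν) Bad ≤ ENNReal.ofReal δ := by
    rw [Measure.prod_apply hBad]
    calc ∫⁻ x, ν (Prod.mk x ⁻¹' Bad) ∂μ ≤ ∫⁻ _, ENNReal.ofReal δ ∂μ := by
          apply lintegral_mono_ae
          filter_upwards [stepA] with x hx
          exact hx
      _ = ENNReal.ofReal δ := by simp
  have hfub2 : ∫⁻ w, μ ((fun x => (x, w)) ⁻¹' Bad) ∂ν ≤ ENNReal.ofReal δ := by
    rw [← Measure.prod_apply_symm hBad]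
    exact hfub1
  -- extract a good w
  set g : EuclideanSpace ℝ (Fin (k+1)) → ℝ≥0∞ := fun w => μ ((fun x => (x, w)) ⁻¹' Bad) with hg
  have hgmeas : Measurable g := measurable_measure_prodMk_right hBad
  by_cases hex : ∃ w ∈ Metric.ball (0 : EuclideanSpace ℝ (Fin (k+1))) ρ, g w ≤ ENNReal.ofReal δ
  · obtain ⟨w, hwball, hgw⟩ := hex
    refine ⟨(φ w : EuclideanSpace ℝ (Fin d)), ?_, ?_⟩
    · have : ‖(φ w : EuclideanSpace ℝ (Fin d))‖ = ‖w‖ := by rw [← φ.norm_map w]; rfl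
      rw [this]
      exact (mem_ball_zero_iff.mp hwball).le
    · have hMv : MeasurableSet {x : EuclideanSpace ℝ (Fin d) | M x ((φ w : EuclideanSpace ℝ (Fin d)))} := by
        have : {x : EuclideanSpace ℝ (Fin d) | M x ((φ w : EuclideanSpace ℝ (Fin d)))} =
            (fun x => (x, (φ w : EuclideanSpace ℝ (Fin d)))) ⁻¹' {p : (EuclideanSpace ℝ (Fin d)) × (EuclideanSpace ℝ (Fin d)) | M p.1 p.2} := rfl
        rw [this]
        exact (measurable_id.prodMk measurable_const) hM
      have hcompl : μ {x : EuclideanSpace ℝ (Fin d) | M x ((φ w : EuclideanSpace ℝ (Fin d)))}ᶜ ≤ ENNReal.ofReal δ := by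
        have : {x : EuclideanSpace ℝ (Fin d) | M x ((φ w : EuclideanSpace ℝ (Fin d)))}ᶜ = (fun x => (x, w)) ⁻¹' Bad := by
          ext x
          simp [hBadDef]
        rw [this]
        exact hgw
      have h1 : μ {x : EuclideanSpace ℝ (Fin d) | M x ((φ w : EuclideanSpace ℝ (Fin d)))}ᶜ = 1 - μ {x : EuclideanSpace ℝ (Fin d) | M x ((φ w : EuclideanSpace ℝ (Fin d)))} :=
        prob_compl_eq_one_sub hMv
      have h2 : ENNReal.ofReal (1 - δ) ≤ μ {x : EuclideanSpace ℝ (Fin d) | M x ((φ w : EuclideanSpace ℝ (Fin d)))} := by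
        rw [h1] at hcompl
        have h3 : (1:ℝ≥0∞) ≤ ENNReal.ofReal δ + μ {x : EuclideanSpace ℝ (Fin d) | M x ((φ w : EuclideanSpace ℝ (Fin d)))} :=
          tsub_le_iff_right.mp hcompl
        have h4 : (1:ℝ≥0∞) - ENNReal.ofReal δ ≤ μ {x : EuclideanSpace ℝ (Fin d) | M x ((φ w : EuclideanSpace ℝ (Fin d)))} :=
          tsub_le_iff_left.mpr h3
        calc ENNReal.ofReal (1 - δ) = ENNReal.ofReal 1 - ENNReal.ofReal δ :=
              ENNReal.ofReal_sub 1 hδ0.le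
          _ = 1 - ENNReal.ofReal δ := by rw [ENNReal.ofReal_one]
          _ ≤ μ {x : EuclideanSpace ℝ (Fin d) | M x ((φ w : EuclideanSpace ℝ (Fin d)))} := h4
      exact (ENNReal.ofReal_le_iff_le_toReal (measure_ne_top μ _)).mp h2
  · exfalso
    push_neg at hex
    have hae : ∀ᵐ w ∂ν, ENNReal.ofReal δ < g w := by
      rw [ae_iff]
      have hsub2 : {w | ¬ ENNReal.ofReal δ < g w} ⊆
          (Metric.ball (0 : EuclideanSpace ℝ (Fin (k+1))) ρ)ᶜ := by
        intro w hw hball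
        exact hw (hex w hball)
      have hnull : ν (Metric.ball (0 : EuclideanSpace ℝ (Fin (k+1))) ρ)ᶜ = 0 := by
        rw [hν_apply]
        simp
      exact measure_mono_null hsub2 hnull
    have : ENNReal.ofReal δ < ∫⁻ w, g w ∂ν := by
      have heq : ENNReal.ofReal δ = ∫⁻ _, ENNReal.ofReal δ ∂ν := by simp
      rw [heq]
      apply lintegral_strict_mono hνprob.ne_zero hgmeas.aemeasurable
      · simp [ENNReal.ofReal_lt_top.ne]
      · exact hae
    exact absurd hfub2 (not_le.mpr this)
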